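/- Let Q be a poset in which every downset {p : p ≤ q} is finite, and let F : C → Q be an initial functor from a small category C. Then every element q ∈ Q whose strict downset {p : p < q} is disconnected (including empty) lies in the image of F on objects. -/

import Mathlib

open CategoryTheory

/-- A single comparability step within `S` with respect to the relation `r`. -/
def StepIn {α : Type*} (S : Set α) (r : α → α → Prop) (x y : α) : Prop :=
  x ∈ S ∧ y ∈ S ∧ (r x y ∨ r y x)

/-- Connectivity of the set `S` equipped with the relation `r`: `S` is nonempty and any
two elements of `S` are joined by a finite zigzag of `r`-steps within `S`. -/
def ConnIn {α : Type*} (S : Set α) (r : α → α → Prop) : Prop :=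
  S.Nonempty ∧ ∀ a ∈ S, ∀ b ∈ S, Relation.ReflTransGen (StepIn S r) a b

/-- Connectivity of a subset of a poset, as a subposet (zigzags of comparabilities). -/
def PosetConn {α : Type*} [LE α] (S : Set α) : Prop := ConnIn S (· ≤ ·)

/-- `a` and `b` lie in `S` in the same connected component of the subposet `S`. -/
def SameComp {α : Type*} [LE α] (S : Set α) (a b : α) : Prop :=
  a ∈ S ∧ b ∈ S ∧ Relation.ReflTransGen (StepIn S (· ≤ ·)) a b

/-- Let `Q` be a poset with finite downsets and `F : C ⥤ Q` an initial functor from a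
small category. Then every `q : Q` whose strict downset is disconnected (including
empty) lies in the image of `F` on objects. -/
theorem stmt4 {Q : Type} [PartialOrder Q] (hfin : ∀ q : Q, (Set.Iic q).Finite)
    {C : Type} [SmallCategory C] (F : C ⥤ Q) [F.Initial] :
    ∀ q : Q, ¬ PosetConn (Set.Iio q) → ∃ c : C, F.obj c = q := by
  intro q hq
  by_contra hc
  push_neg at hc
  apply hq
  have hmem : ∀ X : CostructuredArrow F q, F.obj X.left ∈ Set.Iio q := fun X =>
    lt_of_le_of_ne (leOfHom X.hom) (hc X.left)
  -- F-values are mutually connected in Iio q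
  have key : ∀ X Y : CostructuredArrow F q,
      Relation.ReflTransGen (StepIn (Set.Iio q) (· ≤ ·)) (F.obj X.left) (F.obj Y.left) := by
    intro X Y
    have hz := isPreconnected_zigzag X Y
    exact Relation.ReflTransGen.lift (fun Z : CostructuredArrow F q => F.obj Z.left)
      (fun A B hab => by
        rcases hab with ⟨⟨f⟩⟩ | ⟨⟨f⟩⟩
        · exact ⟨hmem A, hmem B, Or.inl (leOfHom (F.map f.left))⟩
        · exact ⟨hmem A, hmem B, Or.inr (leOfHom (F.map f.left))⟩) X Y hz
  -- each a ∈ Iio q is one step from some F-value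
  have link : ∀ a ∈ Set.Iio q, ∃ X : CostructuredArrow F q,
      StepIn (Set.Iio q) (· ≤ ·) a (F.obj X.left) := by
    intro a ha
    obtain ⟨Xa⟩ : Nonempty (CostructuredArrow F a) :=
      (Functor.Initial.out (F := F) a).is_nonempty
    refine ⟨CostructuredArrow.mk (homOfLE ((leOfHom Xa.hom).trans ha.le) : F.obj Xa.left ⟶ q),
      ha, ?_, Or.inr (leOfHom Xa.hom)⟩
    exact lt_of_le_of_lt (leOfHom Xa.hom) ha
  constructor
  · obtain ⟨X⟩ : Nonempty (CostructuredArrow F q) := (Functor.Initial.out (F := F) q).is_nonempty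
    exact ⟨F.obj X.left, hmem X⟩
  · intro a ha b hb
    obtain ⟨X, hX⟩ := link a ha
    obtain ⟨Y, hY⟩ := link b hb
    have hY' : StepIn (Set.Iio q) (· ≤ ·) (F.obj Y.left) b := ⟨hY.2.1, hY.1, hY.2.2.symm⟩
    exact ((Relation.ReflTransGen.single hX).trans (key X Y)).trans
      (Relation.ReflTransGen.single hY')
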